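/- Let M = [[−2, b₁],[b₁, b₂]] be a 2×2 real symmetric matrix with integer entries satisfying b₁ ≤ 1, b₂ ≤ 0, b₁ ≥ max{−2, b₂} − 1 and b₂ ≥ −2, such that M has smallest eigenvalue less than −2 but every proper principal submatrix of M has smallest eigenvalue at least −2. Then b₁ ∈ {1, −1, −2, −3} and −2 ≤ b₂ ≤ min{0, b₁ + 1}. -/

import Mathlib

open Matrix

/-- For `M = [[-2, b₁],[b₁, b₂]]` with integer entries, `b₁ ≤ 1`, `b₂ ≤ 0`,
`b₁ ≥ max(-2, b₂) - 1`, `b₂ ≥ -2` (so every proper principal submatrix has smallest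
eigenvalue at least `-2`) and smallest eigenvalue of `M` less than `-2`, one has
`b₁ ∈ {1, -1, -2, -3}` and `-2 ≤ b₂ ≤ min(0, b₁ + 1)`. -/
theorem stmt_16 (b1 b2 : ℤ)
    (M : Matrix (Fin 2) (Fin 2) ℝ)
    (hMdef : M = !![(-2 : ℝ), (b1 : ℝ); (b1 : ℝ), (b2 : ℝ)])
    (hM : M.IsHermitian)
    (h1 : b1 ≤ 1) (h2 : b2 ≤ 0) (h3 : max (-2) b2 - 1 ≤ b1) (h4 : -2 ≤ b2)
    (hmin : (⨅ i, hM.eigenvalues i) < -2) :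
    (b1 = 1 ∨ b1 = -1 ∨ b1 = -2 ∨ b1 = -3) ∧ -2 ≤ b2 ∧ b2 ≤ min 0 (b1 + 1) := by
  have hb1ne : b1 ≠ 0 := by
    intro hb1
    obtain ⟨i, hi⟩ := exists_lt_of_ciInf_lt hmin
    set μ := hM.eigenvalues i with hμ
    have hv := hM.mulVec_eigenvectorBasis i
    set v := hM.eigenvectorBasis i with hvdef
    have hv0 : (M *ᵥ ⇑v) 0 = μ • (⇑v) 0 := by rw [hv]; rfl
    have hv1 : (M *ᵥ ⇑v) 1 = μ • (⇑v) 1 := by rw [hv]; rfl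
    have hm0 : (M *ᵥ ⇑v) 0 = -2 * v 0 + (b1 : ℝ) * v 1 := by
      simp [hMdef, Matrix.mulVec, dotProduct, Fin.sum_univ_two]
    have hm1 : (M *ᵥ ⇑v) 1 = (b1 : ℝ) * v 0 + (b2 : ℝ) * v 1 := by
      simp [hMdef, Matrix.mulVec, dotProduct, Fin.sum_univ_two]
    rw [hm0] at hv0
    rw [hm1] at hv1
    have hb1R : (b1 : ℝ) = 0 := by exact_mod_cast congrArg (Int.cast : ℤ → ℝ) hb1
    rw [hb1R] at hv0 hv1
    have hμlt : μ < -2 := hi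
    have hvz0 : v 0 = 0 := by
      have h : (μ + 2) * v 0 = 0 := by
        have h0 := hv0
        simp at h0
        linear_combination -h0
      rcases mul_eq_zero.1 h with h | h
      · linarith
      · exact h
    have hb2R : (-2 : ℝ) ≤ (b2 : ℝ) := by exact_mod_cast h4
    have hvz1 : v 1 = 0 := by
      have h1' := hv1
      simp at h1'
      rcases h1' with h | h
      · linarith
      · exact h
    have hvne : v ≠ 0 := hM.eigenvectorBasis.toBasis.ne_zero i
    apply hvne
    ext j
    fin_cases j
    · exact hvz0
    · exact hvz1
  have hmax : (-2 : ℤ) ≤ max (-2) b2 := le_max_left _ _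
  have hb2le : b2 ≤ max (-2) b2 := le_max_right _ _
  refine ⟨by omega, h4, by omega⟩
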